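/- Comparison of forward and backward variances (equations (fpK12:3) and (fpK12:4)). For all v ≤ u, setting ξ = e^{−α(u,v)} ∈ (0,1], one has v₋(u,v) ≤ ξ^{−2} v̂₊(u,v), and moreover v₋(u,v)/v̄ ≤ 1 − ξ² ≤ v̂₊(u,v)/v̲, where v̄ = max_{[0,T]} v* and v̲ = min_{[0,T]} v*. -/

import Mathlib

open MeasureTheory intervalIntegral

/-- Comparison of forward and backward variances
(equations (fpK12:3) and (fpK12:4)). -/
theorem forward_backward_variance_comparison
    (T : ℝ) (hT : 0 < T) (a g : ℝ → ℝ)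
    (ha : Continuous a) (hg : Continuous g)
    (haper : ∀ t, a (t + T) = a t) (hgper : ∀ t, g (t + T) = g t)
    (a0 g0 : ℝ) (ha0 : 0 < a0) (hg0 : 0 < g0)
    (halb : ∀ t, a0 ≤ a t) (hglb : ∀ t, g0 ≤ g t)
    (α : ℝ → ℝ) (hα : ∀ t, α t = ∫ u in (0:ℝ)..t, a u)
    (vstar : ℝ → ℝ) (hvstar : ∀ t, vstar t = g t ^ 2 / (2 * a t))
    (vbar vlow : ℝ)
    (hvbar : IsGreatest (vstar '' Set.Icc 0 T) vbar)
    (hvlow : IsLeast (vstar '' Set.Icc 0 T) vlow)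
    (vm : ℝ → ℝ → ℝ)
    (hvm : ∀ u v, vm u v = ∫ s in v..u, Real.exp (-2 * (α u - α s)) * g s ^ 2)
    (vhat : ℝ → ℝ → ℝ)
    (hvhat : ∀ u v, vhat u v = ∫ s in v..u, Real.exp (-2 * (α s - α v)) * g s ^ 2) :
    ∀ v u : ℝ, v ≤ u →
      (0 < Real.exp (-(α u - α v)) ∧ Real.exp (-(α u - α v)) ≤ 1)
      ∧ vm u v ≤ (Real.exp (-(α u - α v)))⁻¹ ^ 2 * vhat u v
      ∧ vm u v / vbar ≤ 1 - (Real.exp (-(α u - α v))) ^ 2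
      ∧ 1 - (Real.exp (-(α u - α v))) ^ 2 ≤ vhat u v / vlow := by
  have hapos : ∀ t, 0 < a t := fun t => lt_of_lt_of_le ha0 (halb t)
  have hgpos : ∀ t, 0 < g t := fun t => lt_of_lt_of_le hg0 (hglb t)
  -- α has derivative a
  have hαderiv : ∀ t : ℝ, HasDerivAt α (a t) t := by
    intro t
    have h1 : HasDerivAt (fun t => ∫ u in (0:ℝ)..t, a u) (a t) t :=
      intervalIntegral.integral_hasDerivAt_right (ha.intervalIntegrable 0 t)
        (ha.stronglyMeasurableAtFilter _ _) ha.continuousAt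
    exact h1.congr_of_eventuallyEq (Filter.Eventually.of_forall hα)
  have hαcont : Continuous α :=
    continuous_iff_continuousAt.mpr fun t => (hαderiv t).continuousAt
  have hαmono : ∀ s u : ℝ, s ≤ u → α s ≤ α u := by
    intro s u hsu
    have hadd : (∫ x in (0:ℝ)..s, a x) + ∫ x in s..u, a x = ∫ x in (0:ℝ)..u, a x :=
      intervalIntegral.integral_add_adjacent_intervals
      (ha.intervalIntegrable 0 s) (ha.intervalIntegrable s u)
    have hnn : 0 ≤ ∫ x in s..u, a x :=
      intervalIntegral.integral_nonneg hsu (fun x _ => (hapos x).le)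
    rw [hα s, hα u]; linarith
  have hvstarpos : ∀ t, 0 < vstar t := by
    intro t
    rw [hvstar]
    exact div_pos (pow_pos (hgpos t) 2) (by linarith [hapos t])
  obtain ⟨tb, htb, hvb⟩ := hvbar.1
  obtain ⟨tl, htl, hvl⟩ := hvlow.1
  have hvbarpos : 0 < vbar := hvb ▸ hvstarpos tb
  have hvlowpos : 0 < vlow := hvl ▸ hvstarpos tl
  have hper : Function.Periodic vstar T := by
    intro s; rw [hvstar, hvstar, haper, hgper]
  have hbnd : ∀ s, vlow ≤ vstar s ∧ vstar s ≤ vbar := by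
    intro s
    obtain ⟨y, hy, hyy⟩ := hper.exists_mem_Ico₀ hT s
    have hmem : vstar y ∈ vstar '' Set.Icc 0 T := ⟨y, ⟨hy.1, hy.2.le⟩, rfl⟩
    rw [hyy]
    exact ⟨hvlow.2 hmem, hvbar.2 hmem⟩
  intro v u hvu
  have hαvu : α v ≤ α u := hαmono v u hvu
  have hξpos : 0 < Real.exp (-(α u - α v)) := Real.exp_pos _
  have hξle : Real.exp (-(α u - α v)) ≤ 1 := by
    rw [← Real.exp_zero]; exact Real.exp_le_exp.mpr (by linarith)
  have hξ2 : Real.exp (-(α u - α v)) ^ 2 = Real.exp (-2 * (α u - α v)) := by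
    rw [sq, ← Real.exp_add]; ring_nf
  -- continuity facts
  have hc1 : Continuous (fun s => Real.exp (-2 * (α u - α s)) * g s ^ 2) :=
    (Real.continuous_exp.comp (continuous_const.mul
      (continuous_const.sub hαcont))).mul (hg.pow 2)
  have hc2 : Continuous (fun s => Real.exp (-2 * (α s - α v)) * g s ^ 2) :=
    (Real.continuous_exp.comp (continuous_const.mul
      (hαcont.sub continuous_const))).mul (hg.pow 2)
  have hc3 : Continuous (fun s => Real.exp (-2 * (α u - α s)) * (2 * a s)) :=
    (Real.continuous_exp.comp (continuous_const.mul
      (continuous_const.sub hαcont))).mul (continuous_const.mul ha)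
  have hc4 : Continuous (fun s => Real.exp (-2 * (α s - α v)) * (2 * a s)) :=
    (Real.continuous_exp.comp (continuous_const.mul
      (hαcont.sub continuous_const))).mul (continuous_const.mul ha)
  -- FTC computations
  have hFder : ∀ s : ℝ, HasDerivAt (fun s => Real.exp (-2 * (α u - α s)))
      (Real.exp (-2 * (α u - α s)) * (2 * a s)) s := by
    intro s
    have h0 : HasDerivAt (fun s => -2 * (α u - α s)) (2 * a s) s := by
      have h1 : HasDerivAt (fun y => -2 * (α u - α y)) (-2 * -a s) s :=
        ((hαderiv s).const_sub (α u)).const_mul (-2)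
      convert h1 using 1; ring
    exact h0.exp
  have key1 : (∫ s in v..u, Real.exp (-2 * (α u - α s)) * (2 * a s))
      = 1 - Real.exp (-(α u - α v)) ^ 2 := by
    rw [intervalIntegral.integral_eq_sub_of_hasDerivAt (fun s _ => hFder s)
      (hc3.intervalIntegrable v u), hξ2]
    simp
  have hGder : ∀ s : ℝ, HasDerivAt (fun s => -Real.exp (-2 * (α s - α v)))
      (Real.exp (-2 * (α s - α v)) * (2 * a s)) s := by
    intro s
    have h0 : HasDerivAt (fun s => -2 * (α s - α v)) (-2 * a s) s := by
      have h1 := ((hαderiv s).sub_const (α v)).const_mul (-2)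
      convert h1 using 1
    have h2 : HasDerivAt (fun s => -Real.exp (-2 * (α s - α v)))
        (-(Real.exp (-2 * (α s - α v)) * (-2 * a s))) s := h0.exp.neg
    convert h2 using 1; ring
  have key2 : (∫ s in v..u, Real.exp (-2 * (α s - α v)) * (2 * a s))
      = 1 - Real.exp (-(α u - α v)) ^ 2 := by
    rw [intervalIntegral.integral_eq_sub_of_hasDerivAt (fun s _ => hGder s)
      (hc4.intervalIntegrable v u), hξ2]
    simp
    ring
  refine ⟨⟨hξpos, hξle⟩, ?_, ?_, ?_⟩
  · -- vm ≤ ξ⁻² vhat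
    rw [hvm, hvhat, ← intervalIntegral.integral_const_mul]
    apply intervalIntegral.integral_mono_on hvu (hc1.intervalIntegrable v u)
      ((continuous_const.mul hc2).intervalIntegrable v u)
    intro s hs
    have hs1 : α s ≤ α u := hαmono s u hs.2
    have hs2 : α v ≤ α s := hαmono v s hs.1
    have hcoef : (Real.exp (-(α u - α v)))⁻¹ ^ 2 * Real.exp (-2 * (α s - α v))
        = Real.exp (2 * (α u - α s)) := by
      rw [← Real.exp_neg, sq, ← Real.exp_add, ← Real.exp_add]
      ring_nf
    calc Real.exp (-2 * (α u - α s)) * g s ^ 2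
        ≤ Real.exp (2 * (α u - α s)) * g s ^ 2 := by
          apply mul_le_mul_of_nonneg_right (Real.exp_le_exp.mpr (by linarith))
            (sq_nonneg _)
      _ = (Real.exp (-(α u - α v)))⁻¹ ^ 2 * (Real.exp (-2 * (α s - α v)) * g s ^ 2) := by
          rw [← mul_assoc, hcoef]
  · -- vm / vbar ≤ 1 - ξ²
    rw [div_le_iff₀ hvbarpos]
    have h1 : vm u v ≤ vbar * (1 - Real.exp (-(α u - α v)) ^ 2) := by
      rw [hvm, ← key1, ← intervalIntegral.integral_const_mul]
      apply intervalIntegral.integral_mono_on hvu (hc1.intervalIntegrable v u)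
        ((continuous_const.mul hc3).intervalIntegrable v u)
      intro s _
      have hub := (hbnd s).2
      rw [hvstar] at hub
      have hg2 : g s ^ 2 ≤ 2 * a s * vbar := by
        have := (div_le_iff₀ (by linarith [hapos s] : (0:ℝ) < 2 * a s)).mp hub
        linarith
      simp only [Pi.mul_apply]
      nlinarith [Real.exp_pos (-2 * (α u - α s)), (Real.exp_pos (-2 * (α u - α s))).le,
        mul_nonneg (Real.exp_pos (-2 * (α u - α s))).le (sub_nonneg.mpr hg2)]
    linarith
  · -- 1 - ξ² ≤ vhat / vlow
    rw [le_div_iff₀ hvlowpos]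
    have h1 : vlow * (1 - Real.exp (-(α u - α v)) ^ 2) ≤ vhat u v := by
      rw [hvhat, ← key2, ← intervalIntegral.integral_const_mul]
      apply intervalIntegral.integral_mono_on hvu
        ((continuous_const.mul hc4).intervalIntegrable v u)
        (hc2.intervalIntegrable v u)
      intro s _
      have hlb := (hbnd s).1
      rw [hvstar] at hlb
      have hg2 : 2 * a s * vlow ≤ g s ^ 2 := by
        have := (le_div_iff₀ (by linarith [hapos s] : (0:ℝ) < 2 * a s)).mp hlb
        linarith
      simp only [Pi.mul_apply]
      nlinarith [mul_nonneg (Real.exp_pos (-2 * (α s - α v))).le (sub_nonneg.mpr hg2)]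
    linarith
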